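/- For every α > 0 there exist η₀ > 0 and n₀ ∈ ℕ such that the following holds for all 0 < η ≤ η₀ and all n ≥ n₀: if H is an n-vertex 3-graph with minimum codegree δ₂(H) ≥ (1/3 + α)n, then for every vertex v of H, the set Ñ_{η,1}(v) of vertices that are (η,1)-reachable to v has size at least (1/3 + α/2)n. -/

import Mathlib

open Finset

variable {V : Type*} [DecidableEq V] [Fintype V]

/-- A tight path in a 3-graph `H`: a list of distinct vertices in which every 3
consecutive vertices form an edge of `H`. -/
def IsTightPath (H : Finset (Finset V)) (l : List V) : Prop :=
  l.Nodup ∧ ∀ (i : ℕ) (h : i + 2 < l.length),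
    ({l[i]'(by omega), l[i + 1]'(by omega), l[i + 2]'(by omega)} : Finset V) ∈ H

/-- The codegree of a pair of vertices. -/
def codeg (H : Finset (Finset V)) (u v : V) : ℕ :=
  (H.filter fun e => u ∈ e ∧ v ∈ e).card

/-- The first end of a tight path `v₁ v₂ ⋯ v_p`, i.e. the ordered pair `(v₂, v₁)`. -/
def firstEnd (l : List V) : Option (V × V) :=
  match l with
  | a :: b :: _ => some (b, a)
  | _ => none

/-- The last end of a tight path `v₁ v₂ ⋯ v_p`, i.e. the ordered pair `(v_{p-1}, v_p)`. -/
def lastEnd (l : List V) : Option (V × V) :=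
  firstEnd l.reverse

/-- The set of vertices covered by a family of paths. -/
def famVerts (Ps : List (List V)) : Finset V :=
  Ps.foldr (fun P s => P.toFinset ∪ s) ∅

/-- A family of pairwise vertex-disjoint tight paths. -/
def PathFamily (H : Finset (Finset V)) (Ps : List (List V)) : Prop :=
  (∀ P ∈ Ps, IsTightPath H P) ∧
  Ps.Pairwise fun P Q => Disjoint P.toFinset Q.toFinset

/-- Two families of paths have the same length and corresponding members have the same ends. -/
def SameEndsList (Ps Qs : List (List V)) : Prop :=
  Ps.length = Qs.length ∧ ∀ j < Ps.length,
    firstEnd (Ps.getD j []) = firstEnd (Qs.getD j []) ∧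
    lastEnd (Ps.getD j []) = lastEnd (Qs.getD j [])

/-- `u` and `v` are `(β, i)`-reachable in `H`. -/
def Reachable (H : Finset (Finset V)) (β : ℝ) (i : ℕ) (u v : V) : Prop :=
  β * (Fintype.card V : ℝ) ^ (5 * i - 1) ≤
    (({T : Finset V | T.card = 5 * i - 1 ∧
      ∃ Ps Qs : List (List V), Ps.length = i ∧
        (∀ P ∈ Ps, IsTightPath H P ∧ P.length = 5) ∧
        (∀ Q ∈ Qs, IsTightPath H Q ∧ Q.length = 5) ∧
        Ps.Pairwise (fun P P' => Disjoint P.toFinset P'.toFinset) ∧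
        Qs.Pairwise (fun Q Q' => Disjoint Q.toFinset Q'.toFinset) ∧
        famVerts Ps = insert u T ∧ famVerts Qs = insert v T ∧
        SameEndsList Ps Qs} : Set (Finset V)).ncard : ℝ)

/-- The set `Ñ_{β,i}(v)` of vertices `(β,i)`-reachable to `v`. -/
def reachSet (H : Finset (Finset V)) (β : ℝ) (i : ℕ) (v : V) : Set V :=
  {u | u ≠ v ∧ Reachable H β i u v}

/-- A vertex set is `(β, i)`-closed in `H`. -/
def IsClosedSet (H : Finset (Finset V)) (β : ℝ) (i : ℕ) (U : Finset V) : Prop :=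
  ∀ u ∈ U, ∀ v ∈ U, u ≠ v → Reachable H β i u v

/-- `Ps` is an `S`-absorber in `H`. -/
def IsAbsorber (H : Finset (Finset V)) (S : Finset V) (Ps : List (List V)) : Prop :=
  PathFamily H Ps ∧ Disjoint (famVerts Ps) S ∧
  ∃ Qs : List (List V), PathFamily H Qs ∧ famVerts Qs = famVerts Ps ∪ S ∧
    SameEndsList Ps Qs

/-- Two edges of `H` sharing exactly two vertices. -/
def EdgeAdj (H : Finset (Finset V)) (e f : Finset V) : Prop :=
  e ∈ H ∧ f ∈ H ∧ (e ∩ f).card = 2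

/-- Two edges lie in the same tight component: they are joined by a pseudo-path. -/
def SameTightComponent (H : Finset (Finset V)) (e f : Finset V) : Prop :=
  e ∈ H ∧ f ∈ H ∧ Relation.ReflTransGen (EdgeAdj H) e f

/-- `H` has at most two tight components: among any three edges two lie in a common
tight component. -/
def AtMostTwoTightComponents (H : Finset (Finset V)) : Prop :=
  ∀ e ∈ H, ∀ f ∈ H, ∀ g ∈ H,
    SameTightComponent H e f ∨ SameTightComponent H e g ∨ SameTightComponent H f g

/-- The number of edges of `H` containing the set `p`. -/
def degPair (H : Finset (Finset V)) (p : Finset V) : ℕ :=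
  (H.filter fun e => p ⊆ e).card

/-- `H` is `(μ, θ)`-dense: all but at most `θ * C(n,2)` pairs have codegree at least `μ n`. -/
def Dense3 (H : Finset (Finset V)) (μ θ : ℝ) : Prop :=
  (({p : Finset V | p.card = 2 ∧ (degPair H p : ℝ) < μ * Fintype.card V} :
      Set (Finset V)).ncard : ℝ) ≤ θ * ((Fintype.card V).choose 2)

/-- `H` is strongly `(μ, θ)`-dense. -/
def StronglyDense3 (H : Finset (Finset V)) (μ θ : ℝ) : Prop :=
  Dense3 H μ θ ∧ ∀ p : Finset V, p.card = 2 →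
    degPair H p = 0 ∨ μ * Fintype.card V ≤ (degPair H p : ℝ)

/-- A tight Hamilton cycle: a cyclic ordering of all vertices in which every 3
cyclically consecutive vertices form an edge. -/
def IsTightHamCycle (H : Finset (Finset V)) (l : List V) : Prop :=
  l.Nodup ∧ l.toFinset = Finset.univ ∧ 3 ≤ l.length ∧
  ∀ (i : ℕ) (h : i < l.length),
    ({l[i]'h, l[(i + 1) % l.length]'(Nat.mod_lt _ (by omega)),
      l[(i + 2) % l.length]'(Nat.mod_lt _ (by omega))} : Finset V) ∈ H

/-- `H ∗ K_t^{(3)}`: add `t` new vertices and all triples meeting them. -/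
def starK (H : Finset (Finset V)) (t : ℕ) : Finset (Finset (V ⊕ Fin t)) :=
  (Finset.univ : Finset (Finset (V ⊕ Fin t))).filter fun e =>
    e.card = 3 ∧ ((∃ x ∈ e, x.isRight = true) ∨ ∃ f ∈ H, e = f.image Sum.inl)

/-- The link of a vertex: the set of pairs forming an edge together with it. -/
def linkPairs (H : Finset (Finset V)) (u : V) : Set (Finset V) :=
  {p | p.card = 2 ∧ u ∉ p ∧ insert u p ∈ H}

set_option linter.unusedSectionVars false

section myhelpers

section helpers
variable {V W : Type*} [DecidableEq V] [DecidableEq W]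

lemma card_filter_prod (s : Finset V) (t : Finset W) (P : V → W → Prop)
    [∀ b c, Decidable (P b c)] :
    ((s ×ˢ t).filter fun p => P p.1 p.2).card = ∑ b ∈ s, (t.filter fun c => P b c).card := by
  rw [← Finset.card_sigma]
  apply Finset.card_bij' (i := fun p _ => (⟨p.1, p.2⟩ : Σ _ : V, W)) (j := fun q _ => (q.1, q.2))
  · intro p hp
    simp only [Finset.mem_filter, Finset.mem_product] at hp
    simp [Finset.mem_sigma, hp.1.1, hp.1.2, hp.2]
  · intro q hq
    simp only [Finset.mem_sigma, Finset.mem_filter] at hq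
    simp [Finset.mem_filter, Finset.mem_product, hq.1, hq.2.1, hq.2.2]
  · intro p _; rfl
  · intro q _; rfl

lemma card_filter_prod_swap (s : Finset V) (t : Finset W) (P : V → W → Prop)
    [∀ b c, Decidable (P b c)] :
    ((s ×ˢ t).filter fun p => P p.1 p.2).card = ((t ×ˢ s).filter fun p => P p.2 p.1).card := by
  apply Finset.card_bij' (i := fun p _ => (p.2, p.1)) (j := fun p _ => (p.2, p.1))
  all_goals
    first
    | (intro p hp; rfl)
    | (intro p hp
       simp only [Finset.mem_filter, Finset.mem_product] at hp ⊢
       exact ⟨⟨hp.1.2, hp.1.1⟩, hp.2⟩)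

lemma tri_comm12 (x y z : V) : ({x, y, z} : Finset V) = {y, x, z} := Finset.insert_comm x y {z}

lemma tri_comm23 (x y z : V) : ({x, y, z} : Finset V) = {x, z, y} := by
  rw [Finset.pair_comm y z]

end helpers

section countA
variable {V : Type*} [DecidableEq V] [Fintype V]

lemma countA (H : Finset (Finset V)) (h3 : ∀ e ∈ H, e.card = 3) (b c : V) (hbc : b ≠ c) :
    codeg H b c ≤ (univ.filter fun u => u ≠ b ∧ u ≠ c ∧ ({u, b, c} : Finset V) ∈ H).card := by
  apply Finset.card_le_card_of_surjOn (fun u => ({u, b, c} : Finset V))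
  intro e he
  simp only [Finset.coe_filter, Finset.mem_filter, Finset.mem_coe] at he
  obtain ⟨heH, hb, hc⟩ := he
  have h3e := h3 e heH
  have hsub : ({b, c} : Finset V) ⊆ e := by
    intro x hx; simp only [Finset.mem_insert, Finset.mem_singleton] at hx
    rcases hx with rfl | rfl <;> assumption
  have hone : (e \ {b, c}).card = 1 := by
    rw [Finset.card_sdiff_of_subset hsub, h3e, Finset.card_pair hbc]
  obtain ⟨u, hu⟩ := Finset.card_eq_one.mp hone
  have hum : u ∈ e \ ({b, c} : Finset V) := hu ▸ Finset.mem_singleton_self u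
  rw [Finset.mem_sdiff, Finset.mem_insert, Finset.mem_singleton] at hum
  push_neg at hum
  have hue := hum.1
  have hub := hum.2.1
  have huc := hum.2.2
  have hsub' : ({u, b, c} : Finset V) ⊆ e := by
    intro x hx; simp only [Finset.mem_insert, Finset.mem_singleton] at hx
    rcases hx with rfl | rfl | rfl
    · exact hue
    · exact hb
    · exact hc
  have hcard : ({u, b, c} : Finset V).card = 3 := by
    rw [Finset.card_insert_of_notMem (by simp [hub, huc]), Finset.card_pair hbc]
  have heq : e = ({u, b, c} : Finset V) :=
    (Finset.eq_of_subset_of_card_le hsub' (by omega)).symm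
  refine ⟨u, ?_, heq.symm⟩
  simp only [Set.mem_setOf_eq, Finset.coe_filter, Finset.mem_coe, Finset.mem_univ, true_and]
  exact ⟨hub, huc, heq ▸ heH⟩

end countA

section main
variable {n : ℕ}

def Gpred (H : Finset (Finset (Fin n))) (u v b c : Fin n) : Prop :=
  b ≠ c ∧ b ≠ u ∧ c ≠ u ∧ b ≠ v ∧ c ≠ v ∧
    ({u, b, c} : Finset (Fin n)) ∈ H ∧ ({v, b, c} : Finset (Fin n)) ∈ H

instance (H : Finset (Finset (Fin n))) (u v b c : Fin n) : Decidable (Gpred H u v b c) := by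
  unfold Gpred; infer_instance

lemma tri_comm13 {V : Type*} [DecidableEq V] (x y z : V) :
    ({x, y, z} : Finset V) = {z, y, x} := by
  ext t; simp only [Finset.mem_insert, Finset.mem_singleton]; tauto

lemma Gpred_symm (H : Finset (Finset (Fin n))) (u v b c : Fin n) :
    Gpred H u v b c ↔ Gpred H u v c b := by
  unfold Gpred
  rw [tri_comm23 u b c, tri_comm23 v b c]
  tauto

end main

set_option maxHeartbeats 1000000 in
lemma buildT (H : Finset (Finset (Fin n))) (u v a b c d : Fin n)
    (hba : Gpred H u v b a) (hbc : Gpred H u v b c) (hcd : Gpred H u v c d)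
    (hac : a ≠ c) (hdb : d ≠ b) (had : a ≠ d) :
    ({a, b, c, d} : Finset (Fin n)).card = 5 * 1 - 1 ∧
    ∃ Ps Qs : List (List (Fin n)), Ps.length = 1 ∧
      (∀ P ∈ Ps, IsTightPath H P ∧ P.length = 5) ∧
      (∀ Q ∈ Qs, IsTightPath H Q ∧ Q.length = 5) ∧
      Ps.Pairwise (fun P P' => Disjoint P.toFinset P'.toFinset) ∧
      Qs.Pairwise (fun Q Q' => Disjoint Q.toFinset Q'.toFinset) ∧
      famVerts Ps = insert u {a, b, c, d} ∧ famVerts Qs = insert v {a, b, c, d} ∧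
      SameEndsList Ps Qs := by
  obtain ⟨hba1, hbu, hau, hbv, hav, hUba, hVba⟩ := hba
  obtain ⟨hbc1, _, hcu, _, hcv, hUbc, hVbc⟩ := hbc
  obtain ⟨hcd1, _, hdu, _, hdv, hUcd, hVcd⟩ := hcd
  have hab : a ≠ b := hba1.symm
  have hbd : b ≠ d := hdb.symm
  have huc : u ≠ c := hcu.symm
  have hud : u ≠ d := hdu.symm
  have hvc : v ≠ c := hcv.symm
  have hvd : v ≠ d := hdv.symm
  have hua : u ≠ a := hau.symm
  have hub : u ≠ b := hbu.symm
  have hva : v ≠ a := hav.symm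
  have hvb : v ≠ b := hbv.symm
  have hcard : ({a, b, c, d} : Finset (Fin n)).card = 4 := by
    rw [Finset.card_insert_of_notMem (by simp [hab, hac, had]),
      Finset.card_insert_of_notMem (by simp [hbc1, hbd]), Finset.card_pair hcd1]
  have htpP : IsTightPath H [a, b, u, c, d] := by
    constructor
    · simp [hab, hau, hac, had, hbu, hbc1, hbd, huc, hud, hcd1]
    · intro i hi
      simp only [List.length_cons, List.length_nil] at hi
      have hi3 : i = 0 ∨ i = 1 ∨ i = 2 := by omega
      rcases hi3 with rfl | rfl | rfl
      · simp only [List.getElem_cons_zero, List.getElem_cons_succ]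
        rw [tri_comm13 a b u]; exact hUba
      · simp only [List.getElem_cons_zero, List.getElem_cons_succ]
        rw [tri_comm12 b u c]; exact hUbc
      · simp only [List.getElem_cons_zero, List.getElem_cons_succ]
        exact hUcd
  have htpQ : IsTightPath H [a, b, v, c, d] := by
    constructor
    · simp [hab, hav, hac, had, hbv, hbc1, hbd, hvc, hvd, hcd1]
    · intro i hi
      simp only [List.length_cons, List.length_nil] at hi
      have hi3 : i = 0 ∨ i = 1 ∨ i = 2 := by omega
      rcases hi3 with rfl | rfl | rfl
      · simp only [List.getElem_cons_zero, List.getElem_cons_succ]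
        rw [tri_comm13 a b v]; exact hVba
      · simp only [List.getElem_cons_zero, List.getElem_cons_succ]
        rw [tri_comm12 b v c]; exact hVbc
      · simp only [List.getElem_cons_zero, List.getElem_cons_succ]
        exact hVcd
  refine ⟨by norm_num [hcard], [[a, b, u, c, d]], [[a, b, v, c, d]], rfl, ?_, ?_, ?_, ?_, ?_, ?_, ?_⟩
  · intro P hP
    simp only [List.mem_singleton] at hP
    subst hP
    exact ⟨htpP, rfl⟩
  · intro Q hQ
    simp only [List.mem_singleton] at hQ
    subst hQ
    exact ⟨htpQ, rfl⟩
  · exact List.pairwise_singleton _ _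
  · exact List.pairwise_singleton _ _
  · show ([a, b, u, c, d] : List (Fin n)).toFinset ∪ ∅ = insert u {a, b, c, d}
    rw [Finset.union_empty]
    ext x
    simp only [List.toFinset_cons, List.toFinset_nil, LawfulSingleton.insert_empty_eq, Finset.mem_insert,
      Finset.mem_singleton]
    tauto
  · show ([a, b, v, c, d] : List (Fin n)).toFinset ∪ ∅ = insert v {a, b, c, d}
    rw [Finset.union_empty]
    ext x
    simp only [List.toFinset_cons, List.toFinset_nil, LawfulSingleton.insert_empty_eq, Finset.mem_insert,
      Finset.mem_singleton]
    tauto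
  · refine ⟨rfl, ?_⟩
    intro j hj
    have : j = 0 := by simpa using hj
    subst this
    exact ⟨rfl, rfl⟩


section step2
variable {n : ℕ}

set_option maxHeartbeats 2000000 in
lemma step2 (H : Finset (Finset (Fin n))) (u v : Fin n)
    (β η : ℝ) (hβ : 0 < β) (hη : 0 < η) (hηβ : η ≤ β ^ 3 / 2 ^ 16)
    (hn : (128 : ℝ) / β ^ 2 ≤ n) (hnβ : (32 : ℝ) ≤ β * n)
    (hcard : β * (n : ℝ) ^ 2 ≤
      (((univ ×ˢ univ).filter fun p : Fin n × Fin n => Gpred H u v p.1 p.2).card : ℝ)) :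
    Reachable H η 1 u v := by
  have hn0 : 0 < (n : ℝ) := by nlinarith
  set N : Fin n → Finset (Fin n) := fun b => univ.filter fun c => Gpred H u v b c with hN
  set E : Finset (Fin n × Fin n) :=
    (univ ×ˢ univ).filter fun p : Fin n × Fin n => Gpred H u v p.1 p.2 with hE
  set K : ℕ := ⌈β * n / 4⌉₊ with hK
  have hKle : β * n / 4 ≤ (K : ℝ) := Nat.le_ceil _
  have hKlt : (K : ℝ) < β * n / 4 + 1 := Nat.ceil_lt_add_one (by positivity)
  have hK8 : (8 : ℝ) ≤ (K : ℝ) := le_trans (by nlinarith) hKle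
  have hK1 : 1 ≤ K := by
    have h1 : (1 : ℝ) ≤ (K : ℝ) := by linarith
    exact_mod_cast h1
  set Big : Finset (Fin n) := univ.filter fun b => K ≤ (N b).card with hBig
  set E' : Finset (Fin n × Fin n) :=
    (Big ×ˢ Big).filter fun p : Fin n × Fin n => Gpred H u v p.1 p.2 with hE'
  -- an auxiliary: card of (s ×ˢ univ).filter G = sum of degrees
  have degsum : ∀ s : Finset (Fin n),
      ((s ×ˢ univ).filter fun p : Fin n × Fin n => Gpred H u v p.1 p.2).card
        = ∑ b ∈ s, (N b).card := fun s => card_filter_prod s univ _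
  have degsum' : ∀ s : Finset (Fin n),
      ((univ ×ˢ s).filter fun p : Fin n × Fin n => Gpred H u v p.1 p.2).card
        = ∑ b ∈ s, (N b).card := by
    intro s
    calc ((univ ×ˢ s).filter fun p : Fin n × Fin n => Gpred H u v p.1 p.2).card
        = ((s ×ˢ univ).filter fun p : Fin n × Fin n => Gpred H u v p.2 p.1).card :=
          card_filter_prod_swap univ s _
      _ = ∑ b ∈ s, (univ.filter fun c => Gpred H u v c b).card :=
          card_filter_prod s univ fun b c => Gpred H u v c b
      _ = ∑ b ∈ s, (N b).card := Finset.sum_congr rfl fun b _ => by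
          congr 1
          exact Finset.filter_congr fun c _ => Gpred_symm H u v c b
  -- small-degree sums
  have smallsum : ∀ s : Finset (Fin n), (∀ b ∈ s, (N b).card < K) →
      (∑ b ∈ s, (N b).card : ℝ) ≤ (n : ℝ) * ((K : ℝ) - 1) := by
    intro s hs
    have : (∑ b ∈ s, (N b).card : ℝ) ≤ ∑ b ∈ s, ((K : ℝ) - 1) := by
      push_cast
      apply Finset.sum_le_sum
      intro b hb
      have := hs b hb
      have : (N b).card ≤ K - 1 := by omega
      have h2 : ((N b).card : ℝ) ≤ ((K - 1 : ℕ) : ℝ) := by exact_mod_cast this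
      rw [Nat.cast_sub hK1] at h2
      simpa using h2
    refine le_trans this ?_
    rw [Finset.sum_const, nsmul_eq_mul]
    have hsc : (s.card : ℝ) ≤ n := by
      have := (Finset.card_le_card (Finset.subset_univ s)).trans (le_of_eq (Finset.card_univ.trans (Fintype.card_fin n)))
      exact_mod_cast this
    nlinarith [hK8]
  -- E ⊆ E' ∪ bad₁ ∪ bad₂
  have hEsplit : (E.card : ℝ) ≤ (E'.card : ℝ) + 2 * (n : ℝ) * ((K : ℝ) - 1) := by
    set bad1 := (((univ \ Big) ×ˢ univ).filter
        fun p : Fin n × Fin n => Gpred H u v p.1 p.2) with hb1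
    set bad2 := ((univ ×ˢ (univ \ Big)).filter
        fun p : Fin n × Fin n => Gpred H u v p.1 p.2) with hb2
    have hsub : E ⊆ E' ∪ (bad1 ∪ bad2) := by
      intro p hp
      rw [hE, Finset.mem_filter, Finset.mem_product] at hp
      by_cases h1 : p.1 ∈ Big
      · by_cases h2 : p.2 ∈ Big
        · apply Finset.mem_union_left
          rw [hE', Finset.mem_filter, Finset.mem_product]
          exact ⟨⟨h1, h2⟩, hp.2⟩
        · apply Finset.mem_union_right; apply Finset.mem_union_right
          rw [hb2, Finset.mem_filter, Finset.mem_product]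
          exact ⟨⟨Finset.mem_univ _, Finset.mem_sdiff.mpr ⟨Finset.mem_univ _, h2⟩⟩, hp.2⟩
      · apply Finset.mem_union_right; apply Finset.mem_union_left
        rw [hb1, Finset.mem_filter, Finset.mem_product]
        exact ⟨⟨Finset.mem_sdiff.mpr ⟨Finset.mem_univ _, h1⟩, Finset.mem_univ _⟩, hp.2⟩
    have hb1c : (bad1.card : ℝ) ≤ (n : ℝ) * ((K : ℝ) - 1) := by
      rw [hb1, degsum]
      push_cast
      apply smallsum
      intro b hb
      rw [Finset.mem_sdiff] at hb
      have hnb := hb.2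
      rw [hBig, Finset.mem_filter] at hnb
      push_neg at hnb
      exact hnb (Finset.mem_univ b)
    have hb2c : (bad2.card : ℝ) ≤ (n : ℝ) * ((K : ℝ) - 1) := by
      rw [hb2, degsum']
      push_cast
      apply smallsum
      intro b hb
      rw [Finset.mem_sdiff] at hb
      have hnb := hb.2
      rw [hBig, Finset.mem_filter] at hnb
      push_neg at hnb
      exact hnb (Finset.mem_univ b)
    have h1 : E.card ≤ E'.card + (bad1.card + bad2.card) := by
      calc E.card ≤ (E' ∪ (bad1 ∪ bad2)).card := Finset.card_le_card hsub
        _ ≤ E'.card + (bad1 ∪ bad2).card := Finset.card_union_le _ _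
        _ ≤ E'.card + (bad1.card + bad2.card) :=
            Nat.add_le_add_left (Finset.card_union_le bad1 bad2) _
    have hcast : (E.card : ℝ) ≤ (E'.card : ℝ) + ((bad1.card : ℝ) + (bad2.card : ℝ)) := by
      exact_mod_cast h1
    linarith
  have hE'c : β * (n : ℝ) ^ 2 / 2 ≤ (E'.card : ℝ) := by
    have : 2 * (n : ℝ) * ((K : ℝ) - 1) ≤ β * n ^ 2 / 2 := by nlinarith
    linarith
  -- tuples ((b,c),(a,d)) giving common-link paths a-b-c-d
  set tupF : Finset ((Fin n × Fin n) × (Fin n × Fin n)) :=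
    (E' ×ˢ (univ ×ˢ univ)).filter fun q =>
      Gpred H u v q.1.1 q.2.1 ∧ Gpred H u v q.1.2 q.2.2 ∧
      q.2.1 ≠ q.1.2 ∧ q.2.2 ≠ q.1.1 ∧ q.2.1 ≠ q.2.2 with htupF
  have htupfst : ∀ q ∈ tupF, q.1 ∈ E' := by
    intro q hq
    rw [htupF, Finset.mem_filter, Finset.mem_product] at hq
    exact hq.1.1
  have hfib := Finset.card_eq_sum_card_fiberwise htupfst
  have hinner : ∀ p ∈ E',
      ((K : ℝ) - 1) ^ 2 - (n : ℝ) ≤ ((tupF.filter fun q => q.1 = p).card : ℝ) := by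
    intro p hp
    have hpBig : p.1 ∈ Big ∧ p.2 ∈ Big := by
      rw [hE', Finset.mem_filter, Finset.mem_product] at hp
      exact hp.1
    have hpG : Gpred H u v p.1 p.2 := by
      rw [hE', Finset.mem_filter] at hp
      exact hp.2
    have hK1le : K ≤ (N p.1).card := by
      have := hpBig.1; rw [hBig, Finset.mem_filter] at this; exact this.2
    have hK2le : K ≤ (N p.2).card := by
      have := hpBig.2; rw [hBig, Finset.mem_filter] at this; exact this.2
    set S0 : Finset (Fin n × Fin n) := ((N p.1).erase p.2) ×ˢ ((N p.2).erase p.1) with hS0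
    set Inn : Finset (Fin n × Fin n) := S0.filter fun ad => ad.1 ≠ ad.2 with hInn
    have hInj : Inn.card ≤ (tupF.filter fun q => q.1 = p).card := by
      apply Finset.card_le_card_of_injOn (fun ad => (p, ad))
      · intro ad had
        rw [hInn, Finset.mem_coe, Finset.mem_filter, hS0, Finset.mem_product,
          Finset.mem_erase, Finset.mem_erase] at had
        obtain ⟨⟨⟨h1a, h1b⟩, ⟨h2a, h2b⟩⟩, hne⟩ := had
        rw [hN] at h1b h2b
        rw [Finset.mem_filter] at h1b h2b
        rw [Finset.mem_coe, Finset.mem_filter]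
        refine ⟨?_, rfl⟩
        rw [htupF, Finset.mem_filter, Finset.mem_product, Finset.mem_product]
        exact ⟨⟨hp, Finset.mem_univ _, Finset.mem_univ _⟩, h1b.2, h2b.2, h1a, h2a, hne⟩
      · intro x _ y _ hxy
        have := congrArg Prod.snd hxy
        simpa using this
    have hdiag : (S0.filter fun ad => ad.1 = ad.2).card ≤ n := by
      have : (S0.filter fun ad => ad.1 = ad.2).card ≤ (univ : Finset (Fin n)).card := by
        apply Finset.card_le_card_of_injOn Prod.fst (fun x _ => Finset.mem_univ _)
        intro x hx y hy hxy
        rw [Finset.coe_filter, Set.mem_setOf_eq] at hx hy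
        exact Prod.ext hxy (hx.2 ▸ hy.2 ▸ hxy)
      simpa using this
    have hsplitc := Finset.card_filter_add_card_filter_not
      (s := S0) (p := fun ad => ad.1 = ad.2)
    have hS0card : S0.card = ((N p.1).card - 1) * ((N p.2).card - 1) := by
      rw [hS0, Finset.card_product, Finset.card_erase_of_mem, Finset.card_erase_of_mem]
      · rw [hN, Finset.mem_filter]
        exact ⟨Finset.mem_univ _, (Gpred_symm H u v p.1 p.2).mp hpG⟩
      · rw [hN, Finset.mem_filter]
        exact ⟨Finset.mem_univ _, hpG⟩
    have hInnCard : (Inn.card : ℝ) ≥ ((K : ℝ) - 1) ^ 2 - n := by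
      have hc1 : (1 : ℕ) ≤ (N p.1).card := le_trans hK1 hK1le
      have hc2 : (1 : ℕ) ≤ (N p.2).card := le_trans hK1 hK2le
      have hr1 : ((K : ℝ) - 1) ≤ (((N p.1).card - 1 : ℕ) : ℝ) := by
        rw [Nat.cast_sub hc1]
        push_cast
        have : (K : ℝ) ≤ (N p.1).card := by exact_mod_cast hK1le
        linarith
      have hr2 : ((K : ℝ) - 1) ≤ (((N p.2).card - 1 : ℕ) : ℝ) := by
        rw [Nat.cast_sub hc2]
        push_cast
        have : (K : ℝ) ≤ (N p.2).card := by exact_mod_cast hK2le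
        linarith
      have hKpos : (0 : ℝ) ≤ (K : ℝ) - 1 := by linarith
      have hcc : (Inn.card : ℝ) =
          ((((N p.1).card - 1) * ((N p.2).card - 1) : ℕ) : ℝ)
            - ((S0.filter fun ad => ad.1 = ad.2).card : ℝ) := by
        have heqn : (S0.filter fun ad => ad.1 = ad.2).card + Inn.card = S0.card := by
          rw [hInn]
          have := hsplitc
          simpa using this
        rw [← hS0card]
        have := congrArg (fun x : ℕ => (x : ℝ)) heqn
        push_cast at this
        linarith
      have hdiagr : ((S0.filter fun ad => ad.1 = ad.2).card : ℝ) ≤ n := by exact_mod_cast hdiag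
      rw [hcc]
      push_cast
      nlinarith
    exact hInnCard.le.trans' (le_refl _) |>.trans (by exact_mod_cast hInj)
  have htupcard : (E'.card : ℝ) * (((K : ℝ) - 1) ^ 2 - (n : ℝ)) ≤ (tupF.card : ℝ) := by
    rw [hfib]
    push_cast
    calc (E'.card : ℝ) * (((K : ℝ) - 1) ^ 2 - (n : ℝ))
        = ∑ _p ∈ E', (((K : ℝ) - 1) ^ 2 - (n : ℝ)) := by
          rw [Finset.sum_const, nsmul_eq_mul]
      _ ≤ ∑ p ∈ E', ((tupF.filter fun q => q.1 = p).card : ℝ) := Finset.sum_le_sum hinner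
  -- image to 4-sets
  set f : (Fin n × Fin n) × (Fin n × Fin n) → Finset (Fin n) :=
    fun q => {q.2.1, q.1.1, q.1.2, q.2.2} with hf
  set Fins : Finset (Finset (Fin n)) := tupF.image f with hFins
  have hfiber : tupF.card ≤ 256 * Fins.card := by
    rw [hFins]
    apply Finset.card_le_mul_card_image
    intro T hT
    have hsubT : tupF.filter (fun q => f q = T) ⊆ (T ×ˢ T) ×ˢ (T ×ˢ T) := by
      intro q hq
      rw [Finset.mem_filter] at hq
      have hmem : q.2.1 ∈ T ∧ q.1.1 ∈ T ∧ q.1.2 ∈ T ∧ q.2.2 ∈ T := by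
        rw [← hq.2, hf]
        simp
      rw [Finset.mem_product, Finset.mem_product, Finset.mem_product]
      exact ⟨⟨hmem.2.1, hmem.2.2.1⟩, hmem.1, hmem.2.2.2⟩
    have hTcard : T.card ≤ 4 := by
      obtain ⟨q, hq, rfl⟩ := Finset.mem_image.mp hT
      rw [hf]
      refine le_trans (Finset.card_insert_le _ _) ?_
      refine le_trans (Nat.add_le_add_right (Finset.card_insert_le _ _) 1) ?_
      refine le_trans (Nat.add_le_add_right (Nat.add_le_add_right (Finset.card_insert_le _ _) 1) 1) ?_
      simp
    calc (tupF.filter fun q => f q = T).card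
        ≤ ((T ×ˢ T) ×ˢ (T ×ˢ T)).card := Finset.card_le_card hsubT
      _ = T.card * T.card * (T.card * T.card) := by
          simp [Finset.card_product]
      _ ≤ 256 := le_trans (Nat.mul_le_mul (Nat.mul_le_mul hTcard hTcard)
          (Nat.mul_le_mul hTcard hTcard)) (by norm_num)
  -- every T in Fins is a valid reachability witness
  have hwitness : ∀ T ∈ Fins, T.card = 5 * 1 - 1 ∧
      ∃ Ps Qs : List (List (Fin n)), Ps.length = 1 ∧
        (∀ P ∈ Ps, IsTightPath H P ∧ P.length = 5) ∧
        (∀ Q ∈ Qs, IsTightPath H Q ∧ Q.length = 5) ∧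
        Ps.Pairwise (fun P P' => Disjoint P.toFinset P'.toFinset) ∧
        Qs.Pairwise (fun Q Q' => Disjoint Q.toFinset Q'.toFinset) ∧
        famVerts Ps = insert u T ∧ famVerts Qs = insert v T ∧
        SameEndsList Ps Qs := by
    intro T hT
    rw [hFins] at hT
    obtain ⟨q, hq, rfl⟩ := Finset.mem_image.mp hT
    rw [htupF, Finset.mem_filter, Finset.mem_product] at hq
    obtain ⟨⟨hqE', _⟩, hba, hcd, hac, hdb, had⟩ := hq
    have hbc : Gpred H u v q.1.1 q.1.2 := by
      rw [hE', Finset.mem_filter] at hqE'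
      exact hqE'.2
    exact buildT H u v q.2.1 q.1.1 q.1.2 q.2.2 hba hbc hcd hac hdb had
  -- conclude
  unfold Reachable
  have hsubS : (↑Fins : Set (Finset (Fin n))) ⊆
      {T : Finset (Fin n) | T.card = 5 * 1 - 1 ∧
        ∃ Ps Qs : List (List (Fin n)), Ps.length = 1 ∧
          (∀ P ∈ Ps, IsTightPath H P ∧ P.length = 5) ∧
          (∀ Q ∈ Qs, IsTightPath H Q ∧ Q.length = 5) ∧
          Ps.Pairwise (fun P P' => Disjoint P.toFinset P'.toFinset) ∧
          Qs.Pairwise (fun Q Q' => Disjoint Q.toFinset Q'.toFinset) ∧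
          famVerts Ps = insert u T ∧ famVerts Qs = insert v T ∧
          SameEndsList Ps Qs} := by
    intro T hT
    exact hwitness T (by exact_mod_cast hT)
  have hncard : (Fins.card : ℝ) ≤
      (({T : Finset (Fin n) | T.card = 5 * 1 - 1 ∧
        ∃ Ps Qs : List (List (Fin n)), Ps.length = 1 ∧
          (∀ P ∈ Ps, IsTightPath H P ∧ P.length = 5) ∧
          (∀ Q ∈ Qs, IsTightPath H Q ∧ Q.length = 5) ∧
          Ps.Pairwise (fun P P' => Disjoint P.toFinset P'.toFinset) ∧
          Qs.Pairwise (fun Q Q' => Disjoint Q.toFinset Q'.toFinset) ∧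
          famVerts Ps = insert u T ∧ famVerts Qs = insert v T ∧
          SameEndsList Ps Qs} : Set (Finset (Fin n))).ncard : ℝ) := by
    have := Set.ncard_le_ncard hsubS (Set.toFinite _)
    rw [Set.ncard_coe_finset] at this
    exact_mod_cast this
  rw [Fintype.card_fin]
  refine le_trans ?_ hncard
  -- numeric chain
  have hKmid : β * (n : ℝ) / 8 ≤ (K : ℝ) - 1 := by nlinarith
  have hKsq : β ^ 2 * (n : ℝ) ^ 2 / 128 ≤ ((K : ℝ) - 1) ^ 2 - n := by
    have h1 : β ^ 2 * (n : ℝ) ^ 2 / 64 ≤ ((K : ℝ) - 1) ^ 2 := by nlinarith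
    have h2 : (n : ℝ) ≤ β ^ 2 * (n : ℝ) ^ 2 / 128 := by
      have hb2 : (128 : ℝ) ≤ β ^ 2 * n := by
        have hbpos : (0 : ℝ) < β ^ 2 := by positivity
        rw [div_le_iff₀ hbpos] at hn
        linarith
      nlinarith
    linarith
  have hKsqpos : (0 : ℝ) ≤ ((K : ℝ) - 1) ^ 2 - n := by nlinarith
  have htup2 : β ^ 3 * (n : ℝ) ^ 4 / 256 ≤ (tupF.card : ℝ) := by
    have := mul_le_mul hE'c hKsq (by positivity) (Nat.cast_nonneg _)
    calc β ^ 3 * (n : ℝ) ^ 4 / 256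
        = (β * n ^ 2 / 2) * (β ^ 2 * n ^ 2 / 128) := by ring
      _ ≤ (E'.card : ℝ) * (((K : ℝ) - 1) ^ 2 - n) := this
      _ ≤ (tupF.card : ℝ) := htupcard
  have hfinscard : β ^ 3 * (n : ℝ) ^ 4 / 2 ^ 16 ≤ (Fins.card : ℝ) := by
    have hc : (tupF.card : ℝ) ≤ 256 * (Fins.card : ℝ) := by exact_mod_cast hfiber
    linarith
  have hpow : ((n : ℝ) ^ (5 * 1 - 1) : ℝ) = (n : ℝ) ^ 4 := by norm_num
  rw [hpow]
  have hn4 : (0 : ℝ) ≤ (n : ℝ) ^ 4 := by positivity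
  nlinarith [mul_le_mul_of_nonneg_right hηβ hn4]

end step2

end myhelpers

set_option maxHeartbeats 2000000 in
theorem statement1 :
    ∀ α : ℝ, 0 < α → ∃ η₀ : ℝ, 0 < η₀ ∧ ∃ n₀ : ℕ,
    ∀ η : ℝ, 0 < η → η ≤ η₀ → ∀ n : ℕ, n₀ ≤ n →
    ∀ H : Finset (Finset (Fin n)), (∀ e ∈ H, e.card = 3) →
    (∀ u v : Fin n, u ≠ v → (1 / 3 + α) * n ≤ (codeg H u v : ℝ)) →
    ∀ v : Fin n, (1 / 3 + α / 2) * n ≤ ((reachSet H η 1 v).ncard : ℝ) := by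
  intro α hα
  refine ⟨α ^ 3 / 2 ^ 30, by positivity, ⌈(2 : ℝ) ^ 21 / α ^ 2⌉₊ + 2 ^ 21, ?_⟩
  intro η hη hηle n hnn H h3 hco v
  set β : ℝ := α / 24 with hβdef
  have hβ : 0 < β := by positivity
  have hn1 : (2 : ℝ) ^ 21 ≤ (n : ℝ) := by
    have : (2 ^ 21 : ℕ) ≤ n := by omega
    exact_mod_cast this
  have hn2 : (2 : ℝ) ^ 21 / α ^ 2 ≤ (n : ℝ) := by
    refine le_trans (Nat.le_ceil _) ?_
    have : (⌈(2 : ℝ) ^ 21 / α ^ 2⌉₊ : ℕ) ≤ n := by omega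
    exact_mod_cast this
  have hn0 : (0 : ℝ) < n := by linarith
  have hαn : (2 : ℝ) ^ 21 ≤ α * n := by
    have h1 : (2 : ℝ) ^ 21 ≤ α ^ 2 * n := by
      have hα2 : (0 : ℝ) < α ^ 2 := by positivity
      rw [div_le_iff₀ hα2] at hn2
      linarith
    have h2 : (0 : ℝ) ≤ (α * n - 2 ^ 21) * (α * n + 2 ^ 21) := by
      have : (α * n) ^ 2 ≥ (2 ^ 21 : ℝ) ^ 2 := by nlinarith
      nlinarith
    nlinarith [mul_pos hα hn0]
  -- the link pairs of v
  set Lv : Finset (Fin n × Fin n) := (univ ×ˢ univ).filter fun p =>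
    p.1 ≠ p.2 ∧ p.1 ≠ v ∧ p.2 ≠ v ∧ ({v, p.1, p.2} : Finset (Fin n)) ∈ H with hLv
  set cU : Fin n → ℕ := fun u =>
    ((univ ×ˢ univ).filter fun p : Fin n × Fin n => Gpred H u v p.1 p.2).card with hcU
  -- each common link is inside Lv
  have hsubLv : ∀ u : Fin n, cU u ≤ Lv.card := by
    intro u
    apply Finset.card_le_card
    intro p hp
    rw [Finset.mem_filter] at hp
    obtain ⟨hp1, hg⟩ := hp
    rw [hLv, Finset.mem_filter]
    exact ⟨hp1, hg.1, hg.2.2.2.1, hg.2.2.2.2.1, hg.2.2.2.2.2.2⟩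
  -- Lv is big
  have hLsum0 : Lv.card = ∑ b : Fin n, (univ.filter fun c =>
      b ≠ c ∧ b ≠ v ∧ c ≠ v ∧ ({v, b, c} : Finset (Fin n)) ∈ H).card := by
    rw [hLv]
    exact card_filter_prod univ univ (fun b c =>
      b ≠ c ∧ b ≠ v ∧ c ≠ v ∧ ({v, b, c} : Finset (Fin n)) ∈ H)
  set Fb : Fin n → Finset (Fin n) := fun b => univ.filter fun c =>
    b ≠ c ∧ b ≠ v ∧ c ≠ v ∧ ({v, b, c} : Finset (Fin n)) ∈ H with hFb
  have hLvcard : (1 / 3 + α) * n * ((n : ℝ) - 1) ≤ (Lv.card : ℝ) := by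
    have hLsum : Lv.card = ∑ b : Fin n, (Fb b).card := hLsum0
    have hterm : ∀ b ∈ univ.erase v, (1 / 3 + α) * n ≤ ((Fb b).card : ℝ) := by
      intro b hb
      have hbv : b ≠ v := (Finset.mem_erase.mp hb).1
      have hfeq : Fb b
          = (univ.filter fun c => c ≠ v ∧ c ≠ b ∧ ({c, v, b} : Finset (Fin n)) ∈ H) := by
        rw [hFb]
        apply Finset.filter_congr
        intro c _
        rw [tri_comm12 c v b, tri_comm23 v c b]
        constructor
        · rintro ⟨h1, _, h3', h4⟩
          exact ⟨h3', h1.symm, h4⟩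
        · rintro ⟨h1, h2, h3'⟩
          exact ⟨h2.symm, hbv, h1, h3'⟩
      rw [hfeq]
      refine le_trans (hco v b hbv.symm) ?_
      exact_mod_cast countA H h3 v b hbv.symm
    have hsum2 : ∑ b ∈ univ.erase v, (Fb b).card ≤ Lv.card := by
      rw [hLsum]
      exact Finset.sum_le_sum_of_subset (Finset.subset_univ _)
    have h1 : (((univ.erase v).card : ℕ) : ℝ) * ((1 / 3 + α) * n) ≤ (Lv.card : ℝ) := by
      calc (((univ.erase v).card : ℕ) : ℝ) * ((1 / 3 + α) * n)
          = ∑ _b ∈ univ.erase v, (1 / 3 + α) * (n : ℝ) := by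
            rw [Finset.sum_const, nsmul_eq_mul]
        _ ≤ ∑ b ∈ univ.erase v, ((Fb b).card : ℝ) := Finset.sum_le_sum hterm
        _ = ((∑ b ∈ univ.erase v, (Fb b).card : ℕ) : ℝ) := by push_cast; rfl
        _ ≤ (Lv.card : ℝ) := by exact_mod_cast hsum2
    rw [Finset.card_erase_of_mem (Finset.mem_univ v), Finset.card_univ, Fintype.card_fin] at h1
    have hn1' : 1 ≤ n := by
      by_contra hcon
      push_neg at hcon
      interval_cases n <;> norm_num at hn1
    rw [Nat.cast_sub hn1'] at h1
    push_cast at h1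
    linarith
  -- double counting
  have hswap : ∑ u : Fin n, cU u = ∑ p ∈ (univ ×ˢ univ : Finset (Fin n × Fin n)),
      (univ.filter fun u => Gpred H u v p.1 p.2).card := by
    rw [hcU]
    simp_rw [Finset.card_filter]
    exact Finset.sum_comm
  have hterm2 : ∀ p ∈ Lv, (1 / 3 + α) * n ≤
      ((univ.filter fun u => Gpred H u v p.1 p.2).card : ℝ) := by
    intro p hp
    rw [hLv, Finset.mem_filter] at hp
    obtain ⟨_, hpne, hp1v, hp2v, hpH⟩ := hp
    have hfeq : (univ.filter fun u => Gpred H u v p.1 p.2)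
        = univ.filter fun u => u ≠ p.1 ∧ u ≠ p.2 ∧ ({u, p.1, p.2} : Finset (Fin n)) ∈ H := by
      apply Finset.filter_congr
      intro u _
      unfold Gpred
      constructor
      · rintro ⟨_, h2, h3', _, _, h6, _⟩
        exact ⟨h2.symm, h3'.symm, h6⟩
      · rintro ⟨h1, h2, h3'⟩
        exact ⟨hpne, h1.symm, h2.symm, hp1v, hp2v, h3', hpH⟩
    rw [hfeq]
    refine le_trans (hco p.1 p.2 hpne) ?_
    exact_mod_cast countA H h3 p.1 p.2 hpne
  have hlower : (Lv.card : ℝ) * ((1 / 3 + α) * n) ≤ ((∑ u : Fin n, cU u : ℕ) : ℝ) := by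
    have hs1 : ∑ p ∈ Lv, (univ.filter fun u => Gpred H u v p.1 p.2).card
        ≤ ∑ u : Fin n, cU u := by
      rw [hswap]
      have hLsub : Lv ⊆ (univ ×ˢ univ : Finset (Fin n × Fin n)) := by
        rw [hLv]; exact Finset.filter_subset _ _
      exact Finset.sum_le_sum_of_subset hLsub
    calc (Lv.card : ℝ) * ((1 / 3 + α) * n)
        = ∑ _p ∈ Lv, (1 / 3 + α) * (n : ℝ) := by rw [Finset.sum_const, nsmul_eq_mul]
      _ ≤ ∑ p ∈ Lv, ((univ.filter fun u => Gpred H u v p.1 p.2).card : ℝ) :=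
          Finset.sum_le_sum hterm2
      _ = ((∑ p ∈ Lv, (univ.filter fun u => Gpred H u v p.1 p.2).card : ℕ) : ℝ) := by
          push_cast; rfl
      _ ≤ _ := by exact_mod_cast hs1
  -- the set of vertices with large common link
  set B : ℕ := ⌈β * (n : ℝ) ^ 2⌉₊ with hBdef
  have hBle : (B : ℝ) ≤ β * n ^ 2 + 1 := le_of_lt (Nat.ceil_lt_add_one (by positivity))
  have hBge : β * (n : ℝ) ^ 2 ≤ B := Nat.le_ceil _
  set R : Finset (Fin n) := univ.filter fun u => B ≤ cU u with hR
  have hupper : ((∑ u : Fin n, cU u : ℕ) : ℝ) ≤ (R.card : ℝ) * Lv.card + n * B := by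
    have hsplit : ∑ u ∈ R, cU u + ∑ u ∈ univ.filter fun u => ¬ B ≤ cU u, cU u
        = ∑ u : Fin n, cU u := by
      rw [hR]
      exact Finset.sum_filter_add_sum_filter_not univ _ _
    have h1 : ∑ u ∈ R, cU u ≤ R.card * Lv.card := by
      calc ∑ u ∈ R, cU u ≤ ∑ _u ∈ R, Lv.card := Finset.sum_le_sum fun u _ => hsubLv u
        _ = R.card * Lv.card := by rw [Finset.sum_const, smul_eq_mul]
    have h2 : ∑ u ∈ univ.filter fun u => ¬ B ≤ cU u, cU u ≤ n * B := by
      calc ∑ u ∈ univ.filter fun u => ¬ B ≤ cU u, cU u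
          ≤ ∑ _u ∈ univ.filter fun u => ¬ B ≤ cU u, B :=
            Finset.sum_le_sum fun u hu => le_of_lt
              (by have := (Finset.mem_filter.mp hu).2; omega)
        _ = (univ.filter fun u => ¬ B ≤ cU u).card * B := by
            rw [Finset.sum_const, smul_eq_mul]
        _ ≤ n * B := by
            apply Nat.mul_le_mul_right
            calc (univ.filter fun u => ¬ B ≤ cU u).card ≤ (univ : Finset (Fin n)).card :=
                Finset.card_le_card (Finset.filter_subset _ _)
              _ = n := by rw [Finset.card_univ, Fintype.card_fin]
    have : ∑ u : Fin n, cU u ≤ R.card * Lv.card + n * B := by omega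
    exact_mod_cast this
  -- R is large
  have hRlarge : (1 / 3 + α / 2) * n + 1 ≤ (R.card : ℝ) := by
    have hLpos : (0 : ℝ) < Lv.card := by nlinarith
    have key2 : ((1 / 3 + α / 2) * n + 1) * (Lv.card : ℝ) ≤ (R.card : ℝ) * Lv.card := by
      have hchain : (Lv.card : ℝ) * ((1 / 3 + α) * n) ≤ (R.card : ℝ) * Lv.card + n * B :=
        le_trans hlower hupper
      have hstep : (n : ℝ) * B ≤ (Lv.card : ℝ) * (α * n / 2 - 1) := by
        have e1 : (0 : ℝ) ≤ α * n / 2 - 1 := by nlinarith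
        have hR1 : α * (n : ℝ) ^ 3 / 18 ≤ (1 / 3 + α) * n * ((n : ℝ) - 1) * (α * n / 2 - 1) := by
          have hA : (1 / 3 : ℝ) ≤ 1 / 3 + α := by linarith
          have hB1 : (n : ℝ) / 2 ≤ (n : ℝ) - 1 := by linarith
          have hC : α * n / 3 ≤ α * n / 2 - 1 := by linarith
          calc α * (n : ℝ) ^ 3 / 18 = (1 / 3 * ((n : ℝ) * ((n : ℝ) / 2))) * (α * n / 3) := by
                ring
            _ ≤ ((1 / 3 + α) * ((n : ℝ) * ((n : ℝ) - 1))) * (α * n / 2 - 1) := by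
                apply mul_le_mul ?_ hC (by positivity) ?_
                · apply mul_le_mul hA (mul_le_mul_of_nonneg_left hB1 (le_of_lt hn0))
                    (by positivity) (by linarith)
                · have : (0 : ℝ) ≤ (n : ℝ) * ((n : ℝ) - 1) := by nlinarith
                  nlinarith
            _ = (1 / 3 + α) * n * ((n : ℝ) - 1) * (α * n / 2 - 1) := by ring
        have hR2 : (n : ℝ) * (β * n ^ 2 + 1) ≤ α * (n : ℝ) ^ 3 / 18 := by
          rw [hβdef]
          have hαn2 : (72 : ℝ) ≤ α * n * n := by nlinarith
          nlinarith [mul_le_mul_of_nonneg_right hαn2 (le_of_lt hn0)]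
        calc (n : ℝ) * B ≤ n * (β * n ^ 2 + 1) := by nlinarith
          _ ≤ α * (n : ℝ) ^ 3 / 18 := hR2
          _ ≤ (1 / 3 + α) * n * ((n : ℝ) - 1) * (α * n / 2 - 1) := hR1
          _ ≤ (Lv.card : ℝ) * (α * n / 2 - 1) := by nlinarith
      nlinarith
    exact le_of_mul_le_mul_right key2 hLpos
  -- finish: every u in R (other than v) is reachable to v
  have hreach : ∀ u ∈ R.erase v, u ∈ reachSet H η 1 v := by
    intro u hu
    have huv : u ≠ v := (Finset.mem_erase.mp hu).1
    have huR : B ≤ cU u := (Finset.mem_filter.mp (Finset.mem_erase.mp hu).2).2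
    refine ⟨huv, ?_⟩
    apply step2 H u v β η hβ hη
    · refine le_trans hηle ?_
      rw [hβdef]
      rw [div_le_div_iff₀ (by norm_num) (by norm_num)]
      nlinarith [pow_pos hα 3, pow_nonneg (le_of_lt hα) 3]
    · rw [hβdef]
      have h1 : (128 : ℝ) / (α / 24) ^ 2 = 73728 / α ^ 2 := by
        field_simp
        ring
      rw [h1]
      refine le_trans ?_ hn2
      rw [div_le_div_iff₀ (by positivity) (by positivity)]
      nlinarith [sq_nonneg α]
    · rw [hβdef]
      nlinarith
    · refine le_trans ?_ (le_trans hBge (by exact_mod_cast huR))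
      exact le_refl _
  -- count
  have hsubset : ((R.erase v : Finset (Fin n)) : Set (Fin n)) ⊆ reachSet H η 1 v := by
    intro u hu
    exact hreach u (by exact_mod_cast hu)
  have hcount : ((R.erase v).card : ℝ) ≤ ((reachSet H η 1 v).ncard : ℝ) := by
    have := Set.ncard_le_ncard hsubset (Set.toFinite _)
    rw [Set.ncard_coe_finset] at this
    exact_mod_cast this
  have herase : (R.card : ℝ) - 1 ≤ ((R.erase v).card : ℝ) := by
    have hsub2 : R ⊆ insert v (R.erase v) := by
      intro x hx
      by_cases hxv : x = v
      · subst hxv; exact Finset.mem_insert_self _ _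
      · exact Finset.mem_insert_of_mem (Finset.mem_erase.mpr ⟨hxv, hx⟩)
    have := le_trans (Finset.card_le_card hsub2) (Finset.card_insert_le _ _)
    have hc : (R.card : ℝ) ≤ ((R.erase v).card : ℝ) + 1 := by exact_mod_cast this
    linarith
  linarith
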